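/- Let {Y_α}_{α∈A} be a finite family of real random variables with a_α ≤ Y_α ≤ b_α almost surely, and let X = Σ_{α∈A} Y_α. If A admits a proper cover of size χ (i.e., A can be partitioned/covered by χ subsets, each of which indexes a jointly independent subfamily), then for every t > 0, P(X ≥ E[X] + t) ≤ exp(−2t² / (χ · Σ_{α∈A} (b_α − a_α)²)). -/

import Mathlib

open MeasureTheory ProbabilityTheory Real

lemma hoeffding_scalar {p : ℝ} (hp0 : 0 ≤ p) (hp1 : p ≤ 1) (u : ℝ) :
    (1 - p) + p * Real.exp u ≤ Real.exp (p * u + u ^ 2 / 8) := by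
  set g : ℝ → ℝ := fun x => (1 - p) + p * Real.exp x with hg
  have hgpos : ∀ x, 0 < g x := by
    intro x
    rcases eq_or_lt_of_le hp0 with h | h
    · simp [hg, ← h]
    · have := Real.exp_pos x
      have h1p : 0 ≤ 1 - p := by linarith
      have hgx : g x = 1 - p + p * Real.exp x := rfl
      nlinarith
  set F : ℝ → ℝ := fun x => p * x + x ^ 2 / 8 - Real.log (g x) with hF
  set F' : ℝ → ℝ := fun x => p + x / 4 - p * Real.exp x / g x with hF'
  have hgd : ∀ x, HasDerivAt g (p * Real.exp x) x := by
    intro x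
    exact ((Real.hasDerivAt_exp x).const_mul p).const_add (1 - p)
  have hFd : ∀ x, HasDerivAt F (F' x) x := by
    intro x
    have h1 : HasDerivAt (fun x : ℝ => p * x + x ^ 2 / 8) (p + x * 2 / 8) x := by
      have := ((hasDerivAt_pow 2 x).div_const 8).const_add 0
      exact (((hasDerivAt_id' x).const_mul p).add ((hasDerivAt_pow 2 x).div_const 8)).congr_deriv (by norm_num; ring)
    have h2 : HasDerivAt (fun x => Real.log (g x)) (p * Real.exp x / g x) x :=
      (hgd x).log (hgpos x).ne'
    have := h1.sub h2
    exact this.congr_deriv (by rw [hF']; ring)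
  have hF'd : ∀ x, HasDerivAt F'
      (1 / 4 - (p * Real.exp x * g x - p * Real.exp x * (p * Real.exp x)) / (g x) ^ 2) x := by
    intro x
    have h1 : HasDerivAt (fun x : ℝ => p + x / 4) (1 / 4) x := by
      simpa using ((hasDerivAt_id x).div_const 4).const_add p
    have h2 : HasDerivAt (fun x => p * Real.exp x / g x)
        ((p * Real.exp x * g x - p * Real.exp x * (p * Real.exp x)) / (g x) ^ 2) x :=
      ((Real.hasDerivAt_exp x).const_mul p).div (hgd x) (hgpos x).ne'
    exact h1.sub h2
  have hF'mono : Monotone F' := by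
    apply monotone_of_hasDerivAt_nonneg hF'd
    intro x
    have hgx := hgpos x
    have hgxe : g x = 1 - p + p * Real.exp x := rfl
    have hex := Real.exp_pos x
    have key : 4 * (p * Real.exp x * (1 - p)) ≤ (g x) ^ 2 := by
      nlinarith [sq_nonneg ((1 - p) - p * Real.exp x), hgxe]
    have : (p * Real.exp x * g x - p * Real.exp x * (p * Real.exp x)) / (g x) ^ 2 ≤ 1 / 4 := by
      rw [div_le_iff₀ (by positivity)]
      have : p * Real.exp x * g x - p * Real.exp x * (p * Real.exp x)
          = p * Real.exp x * (1 - p) := by simp only [hg]; ring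
      rw [this]
      nlinarith [key]
    simp only [Pi.zero_apply]
    linarith
  have hF'0 : F' 0 = 0 := by simp [hF', hg]
  have hF0 : F 0 = 0 := by simp [hF, hg]
  have hFnonneg : 0 ≤ F u := by
    rcases le_total 0 u with h | h
    · have hmono : MonotoneOn F (Set.Ici 0) := by
        apply monotoneOn_of_hasDerivWithinAt_nonneg (convex_Ici 0)
          (fun x _ => (hFd x).continuousAt.continuousWithinAt)
          (fun x hx => (hFd x).hasDerivWithinAt)
        intro x hx
        rw [interior_Ici] at hx
        have := hF'mono (le_of_lt hx)
        rw [hF'0] at this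
        exact this
      have := hmono (Set.self_mem_Ici) (Set.mem_Ici.2 h) h
      rwa [hF0] at this
    · have hmono : AntitoneOn F (Set.Iic 0) := by
        apply antitoneOn_of_deriv_nonpos (convex_Iic 0)
          (fun x _ => (hFd x).continuousAt.continuousWithinAt)
          (fun x hx => (hFd x).differentiableAt.differentiableWithinAt)
        intro x hx
        rw [interior_Iic] at hx
        rw [(hFd x).deriv]
        have := hF'mono (le_of_lt hx)
        rw [hF'0] at this
        exact this
      have := hmono (Set.mem_Iic.2 h) (Set.self_mem_Iic) h
      rwa [hF0] at this
  have : Real.log (g u) ≤ p * u + u ^ 2 / 8 := by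
    simp only [hF] at hFnonneg; linarith
  calc g u = Real.exp (Real.log (g u)) := (Real.exp_log (hgpos u)).symm
    _ ≤ Real.exp (p * u + u ^ 2 / 8) := Real.exp_le_exp.2 this


lemma janson_integrable_of_bounded {Ω : Type*} [MeasurableSpace Ω] (μ : Measure Ω)
    [IsProbabilityMeasure μ] {Z : Ω → ℝ} (hZ : AEStronglyMeasurable Z μ) {c : ℝ}
    (h : ∀ᵐ ω ∂μ, |Z ω| ≤ c) : Integrable Z μ :=
  (integrable_const c).mono' hZ (by filter_upwards [h] with ω hω using by simpa using hω)

lemma hoeffding_mgf {Ω : Type*} [MeasurableSpace Ω] (μ : Measure Ω) [IsProbabilityMeasure μ]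
    {Z : Ω → ℝ} (hZ : Measurable Z) {a b : ℝ} (h : ∀ᵐ ω ∂μ, a ≤ Z ω ∧ Z ω ≤ b) (s : ℝ) :
    ∫ ω, Real.exp (s * Z ω) ∂μ ≤ Real.exp (s * ∫ ω, Z ω ∂μ + s ^ 2 * (b - a) ^ 2 / 8) := by
  have hZint : Integrable Z μ := by
    apply janson_integrable_of_bounded μ hZ.aestronglyMeasurable (c := max |a| |b|)
    filter_upwards [h] with ω hω
    rw [abs_le]
    constructor
    · calc -max |a| |b| ≤ -|a| := by simp
        _ ≤ a := neg_abs_le a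
        _ ≤ Z ω := hω.1
    · calc Z ω ≤ b := hω.2
        _ ≤ |b| := le_abs_self b
        _ ≤ max |a| |b| := le_max_right _ _
  set m := ∫ ω, Z ω ∂μ with hm
  have hma : a ≤ m := by
    have := integral_mono_ae (integrable_const a) hZint (h.mono fun ω hω => hω.1)
    simpa using this
  have hmb : m ≤ b := by
    have := integral_mono_ae hZint (integrable_const b) (h.mono fun ω hω => hω.2)
    simpa using this
  rcases eq_or_lt_of_le (hma.trans hmb) with hab | hab
  · -- a = b : Z = a a.s.
    have hZa : ∀ᵐ ω ∂μ, Z ω = a := by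
      filter_upwards [h] with ω hω
      have := hω.1; have := hω.2; linarith
    have h1 : ∫ ω, Real.exp (s * Z ω) ∂μ = Real.exp (s * a) := by
      rw [integral_congr_ae (g := fun _ => Real.exp (s * a))
        (by filter_upwards [hZa] with ω hω; rw [hω])]
      simp
    have h2 : m = a := le_antisymm (hab ▸ hmb) hma
    rw [h1, h2]
    apply Real.exp_le_exp.2
    nlinarith [sq_nonneg (s * (b - a))]
  · -- a < b
    have hba : (0:ℝ) < b - a := by linarith
    set p := (m - a) / (b - a) with hp
    have hp0 : 0 ≤ p := div_nonneg (by linarith) hba.le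
    have hp1 : p ≤ 1 := by
      rw [hp, div_le_one hba]; linarith
    -- pointwise convexity bound, in affine form
    set c1 := (Real.exp (s * b) - Real.exp (s * a)) / (b - a) with hc1
    set c2 := (b * Real.exp (s * a) - a * Real.exp (s * b)) / (b - a) with hc2
    have hpt : ∀ᵐ ω ∂μ, Real.exp (s * Z ω) ≤ c1 * Z ω + c2 := by
      filter_upwards [h] with ω hω
      obtain ⟨h1, h2⟩ := hω
      have hθ : 0 ≤ (b - Z ω) / (b - a) := div_nonneg (by linarith) hba.le
      have hη : 0 ≤ (Z ω - a) / (b - a) := div_nonneg (by linarith) hba.le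
      have hsum : (b - Z ω) / (b - a) + (Z ω - a) / (b - a) = 1 := by
        field_simp
        ring
      have hcv := convexOn_exp.2 (Set.mem_univ (s * a)) (Set.mem_univ (s * b)) hθ hη hsum
      simp only [smul_eq_mul] at hcv
      have heq : (b - Z ω) / (b - a) * (s * a) + (Z ω - a) / (b - a) * (s * b) = s * Z ω := by
        field_simp
        ring
      rw [heq] at hcv
      refine hcv.trans (le_of_eq ?_)
      rw [hc1, hc2]
      field_simp
      ring
    have hZexp_int : Integrable (fun ω => Real.exp (s * Z ω)) μ := by
      apply janson_integrable_of_bounded μ ((hZ.const_mul s).exp.aestronglyMeasurable)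
        (c := Real.exp (|s| * max |a| |b|))
      filter_upwards [h] with ω hω
      rw [abs_of_pos (Real.exp_pos _), Real.exp_le_exp]
      calc s * Z ω ≤ |s * Z ω| := le_abs_self _
        _ = |s| * |Z ω| := abs_mul s _
        _ ≤ |s| * max |a| |b| := by
            apply mul_le_mul_of_nonneg_left _ (abs_nonneg s)
            rw [abs_le]
            constructor
            · calc -max |a| |b| ≤ -|a| := by simp
                _ ≤ a := neg_abs_le a
                _ ≤ Z ω := hω.1
            · calc Z ω ≤ b := hω.2
                _ ≤ |b| := le_abs_self b
                _ ≤ max |a| |b| := le_max_right _ _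
    have hint : ∫ ω, Real.exp (s * Z ω) ∂μ ≤ c1 * m + c2 := by
      have hrhs_int : Integrable (fun ω => c1 * Z ω + c2) μ :=
        (hZint.const_mul c1).add (integrable_const c2)
      calc ∫ ω, Real.exp (s * Z ω) ∂μ
          ≤ ∫ ω, (c1 * Z ω + c2) ∂μ := integral_mono_ae hZexp_int hrhs_int hpt
        _ = c1 * m + c2 := by
            rw [integral_add (hZint.const_mul c1) (integrable_const c2),
              integral_const_mul]
            simp [hm]
    refine hint.trans ?_
    have hkey := hoeffding_scalar hp0 hp1 (s * (b - a))
    have e1 : Real.exp (s * b) = Real.exp (s * a) * Real.exp (s * (b - a)) := by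
      rw [← Real.exp_add]; ring_nf
    have e2 : (b - m) / (b - a) = 1 - p := by
      rw [hp]; field_simp
      ring
    calc c1 * m + c2
        = Real.exp (s * a) * ((1 - p) + p * Real.exp (s * (b - a))) := by
          rw [hc1, hc2, e1, hp]; field_simp; ring
      _ ≤ Real.exp (s * a) * Real.exp (p * (s * (b - a)) + (s * (b - a)) ^ 2 / 8) := by
          apply mul_le_mul_of_nonneg_left hkey (Real.exp_pos _).le
      _ = Real.exp (s * a + p * (s * (b - a)) + (s * (b - a)) ^ 2 / 8) := by
          rw [← Real.exp_add]; ring_nf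
      _ = Real.exp (s * m + s ^ 2 * (b - a) ^ 2 / 8) := by
          congr 1
          have : p * (s * (b - a)) = s * (m - a) := by
            rw [hp]; field_simp
          rw [this]; ring


set_option maxHeartbeats 1000000 in
theorem janson_chromatic_hoeffding
    {Ω : Type*} [MeasurableSpace Ω] (μ : Measure Ω) [IsProbabilityMeasure μ]
    {A : Type*} [Fintype A] (Y : A → Ω → ℝ) (hY : ∀ α, Measurable (Y α))
    (a b : A → ℝ) (hab : ∀ α, ∀ᵐ ω ∂μ, a α ≤ Y α ω ∧ Y α ω ≤ b α)
    (χ : ℕ) (C : Fin χ → Set A) (hcover : (⋃ j, C j) = Set.univ)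
    (hindep : ∀ j, iIndepFun
      (fun α : C j => Y (α : A)) μ)
    (t : ℝ) (ht : 0 < t) :
    (μ {ω | (∫ ω', (∑ α, Y α ω') ∂μ) + t ≤ ∑ α, Y α ω}).toReal ≤
      Real.exp (-2 * t ^ 2 / (χ * ∑ α, (b α - a α) ^ 2)) := by
  classical
  set V : ℝ := ∑ α, (b α - a α) ^ 2 with hVdef
  have hVnonneg : 0 ≤ V := Finset.sum_nonneg fun α _ => sq_nonneg _
  have hLE1 : (μ {ω | (∫ ω', (∑ α, Y α ω') ∂μ) + t ≤ ∑ α, Y α ω}).toReal ≤ 1 := by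
    have h1 := prob_le_one (μ := μ) (s := {ω | (∫ ω', (∑ α, Y α ω') ∂μ) + t ≤ ∑ α, Y α ω})
    calc (μ _).toReal ≤ (1 : ENNReal).toReal := ENNReal.toReal_mono (by simp) h1
      _ = 1 := by simp
  rcases eq_or_lt_of_le (by positivity : (0:ℝ) ≤ (χ:ℝ) * V) with hzero | hpos
  · rw [← hzero, div_zero, Real.exp_zero]
    exact hLE1
  -- main case
  have hχpos : 0 < (χ : ℝ) := by
    rcases Nat.eq_zero_or_pos χ with h0 | h0
    · subst h0; simp at hpos
    · exact_mod_cast h0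
  have hVpos : 0 < V := by
    by_contra h
    push_neg at h
    have : V = 0 := le_antisymm h hVnonneg
    rw [this, mul_zero] at hpos
    exact lt_irrefl 0 hpos
  have hχV : (χ:ℝ) * V ≠ 0 := ne_of_gt hpos
  -- the partition
  set D : Fin χ → Finset A := fun j =>
    Finset.univ.filter (fun α => α ∈ C j ∧ ∀ i, i < j → α ∉ C i) with hD
  have hDmem : ∀ j α, α ∈ D j ↔ (α ∈ C j ∧ ∀ i, i < j → α ∉ C i) := by
    intro j α
    simp [hD]
  have hDsub : ∀ j, ∀ α ∈ D j, α ∈ C j := fun j α h => ((hDmem j α).1 h).1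
  have hDdisj : ((Finset.univ : Finset (Fin χ)) : Set (Fin χ)).PairwiseDisjoint D := by
    intro i _ j _ hij
    apply Finset.disjoint_left.2
    intro α hi hj
    rcases lt_or_gt_of_ne hij with h | h
    · exact ((hDmem j α).1 hj).2 i h (((hDmem i α).1 hi).1)
    · exact ((hDmem i α).1 hi).2 j h (((hDmem j α).1 hj).1)
  have hDcover : Finset.univ.biUnion D = (Finset.univ : Finset A) := by
    apply Finset.eq_univ_of_forall
    intro α
    rw [Finset.mem_biUnion]
    have : α ∈ ⋃ j, C j := by rw [hcover]; trivial
    rw [Set.mem_iUnion] at this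
    have hne : (Finset.univ.filter (fun j => α ∈ C j)).Nonempty := by
      obtain ⟨j, hj⟩ := this
      exact ⟨j, by simp [hj]⟩
    obtain ⟨j₀, hj₀mem, hj₀min⟩ := Finset.exists_min_image _ id hne
    rw [Finset.mem_filter] at hj₀mem
    refine ⟨j₀, Finset.mem_univ _, (hDmem j₀ α).2 ⟨hj₀mem.2, ?_⟩⟩
    intro i hi hCi
    have := hj₀min i (by simp [hCi])
    simp only [id] at this
    exact absurd hi (not_lt.2 this)
  have hsum_decomp : ∀ (f : A → ℝ), ∑ α, f α = ∑ j, ∑ α ∈ D j, f α := by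
    intro f
    rw [← hDcover, Finset.sum_biUnion hDdisj]
  -- block quantities
  set Xj : Fin χ → Ω → ℝ := fun j ω => ∑ α ∈ D j, Y α ω with hXj
  set mα : A → ℝ := fun α => ∫ ω, Y α ω ∂μ with hmα
  set mj : Fin χ → ℝ := fun j => ∑ α ∈ D j, mα α with hmj
  set M : ℝ := ∑ α, mα α with hM
  set Vj : Fin χ → ℝ := fun j => ∑ α ∈ D j, (b α - a α) ^ 2 with hVj
  have hVjnonneg : ∀ j, 0 ≤ Vj j := fun j => Finset.sum_nonneg fun α _ => sq_nonneg _
  have hMsum : M = ∑ j, mj j := hsum_decomp mα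
  have hVsum : V = ∑ j, Vj j := hsum_decomp _
  have hYbd : ∀ α, ∀ᵐ ω ∂μ, |Y α ω| ≤ max |a α| |b α| := by
    intro α
    filter_upwards [hab α] with ω hω
    rw [abs_le]
    constructor
    · calc -max |a α| |b α| ≤ -|a α| := by simp
        _ ≤ a α := neg_abs_le _
        _ ≤ Y α ω := hω.1
    · calc Y α ω ≤ b α := hω.2
        _ ≤ |b α| := le_abs_self _
        _ ≤ max |a α| |b α| := le_max_right _ _
  have hYint : ∀ α, Integrable (Y α) μ := fun α =>
    janson_integrable_of_bounded μ (hY α).aestronglyMeasurable (hYbd α)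
  have hXjmeas : ∀ j, Measurable (Xj j) := fun j => Finset.measurable_sum _ fun α _ => hY α
  have hXjbd : ∀ j, ∀ᵐ ω ∂μ, |Xj j ω| ≤ ∑ α ∈ D j, max |a α| |b α| := by
    intro j
    have : ∀ᵐ ω ∂μ, ∀ α, |Y α ω| ≤ max |a α| |b α| := ae_all_iff.2 hYbd
    filter_upwards [this] with ω hω
    calc |Xj j ω| ≤ ∑ α ∈ D j, |Y α ω| := Finset.abs_sum_le_sum_abs _ _
      _ ≤ ∑ α ∈ D j, max |a α| |b α| := Finset.sum_le_sum fun α _ => hω α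
  -- block mgf bound via independence + Hoeffding
  have hblock : ∀ (j : Fin χ) (s : ℝ),
      ∫ ω, Real.exp (s * Xj j ω) ∂μ ≤ Real.exp (s * mj j + s ^ 2 * Vj j / 8) := by
    intro j u
    set sfin : Finset (C j) := (D j).attach.map
      ⟨fun x => ⟨x.1, hDsub j x.1 x.2⟩, by
        intro x y hxy
        exact Subtype.ext (by simpa using congrArg Subtype.val hxy)⟩ with hsfin
    have hfeq : (∑ i ∈ sfin, (fun α : C j => Y (α : A)) i) = Xj j := by
      funext ω
      rw [Finset.sum_apply, hsfin, Finset.sum_map]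
      exact Finset.sum_attach (D j) (fun α => Y α ω)
    have hmgfeq : mgf (Xj j) μ u = ∏ α ∈ D j, mgf (Y α) μ u := by
      rw [← hfeq, (hindep j).mgf_sum (fun i => hY i) sfin, hsfin, Finset.prod_map]
      exact Finset.prod_attach (D j) (fun α => mgf (Y α) μ u)
    have hLHS : ∫ ω, Real.exp (u * Xj j ω) ∂μ = mgf (Xj j) μ u := rfl
    rw [hLHS, hmgfeq]
    calc ∏ α ∈ D j, mgf (Y α) μ u
        ≤ ∏ α ∈ D j, Real.exp (u * mα α + u ^ 2 * (b α - a α) ^ 2 / 8) := by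
          apply Finset.prod_le_prod (fun α _ => mgf_nonneg)
          intro α _
          exact hoeffding_mgf μ (hY α) (hab α) u
      _ = Real.exp (∑ α ∈ D j, (u * mα α + u ^ 2 * (b α - a α) ^ 2 / 8)) :=
          (Real.exp_sum _ _).symm
      _ = Real.exp (u * mj j + u ^ 2 * Vj j / 8) := by
          congr 1
          rw [Finset.sum_add_distrib, ← Finset.mul_sum]
          simp only [hVj]
          congr 1
          rw [Finset.mul_sum, Finset.sum_div]
  -- choose s
  set s : ℝ := 4 * t / ((χ:ℝ) * V) with hs
  have hspos : 0 < s := by positivity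
  have hXint : Integrable (fun ω => Real.exp (s * ((∑ α, Y α ω) - M))) μ := by
    have hmeas : Measurable (fun ω => (∑ α, Y α ω) - M) :=
      (Finset.measurable_sum _ fun α _ => hY α).sub measurable_const
    apply janson_integrable_of_bounded μ ((hmeas.const_mul s).exp.aestronglyMeasurable)
      (c := Real.exp (|s| * ((∑ α, max |a α| |b α|) + |M|)))
    have : ∀ᵐ ω ∂μ, ∀ α, |Y α ω| ≤ max |a α| |b α| := ae_all_iff.2 hYbd
    filter_upwards [this] with ω hω
    rw [abs_of_pos (Real.exp_pos _), Real.exp_le_exp]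
    have h1 : |(∑ α, Y α ω) - M| ≤ (∑ α, max |a α| |b α|) + |M| := by
      calc |(∑ α, Y α ω) - M| ≤ |∑ α, Y α ω| + |M| := abs_sub _ _
        _ ≤ (∑ α, |Y α ω|) + |M| := by
            gcongr
            exact Finset.abs_sum_le_sum_abs _ _
        _ ≤ (∑ α, max |a α| |b α|) + |M| := by
            gcongr with α
            exact hω α
    calc s * ((∑ α, Y α ω) - M) ≤ |s * ((∑ α, Y α ω) - M)| := le_abs_self _
      _ = |s| * |(∑ α, Y α ω) - M| := abs_mul _ _
      _ ≤ |s| * ((∑ α, max |a α| |b α|) + |M|) := by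
          apply mul_le_mul_of_nonneg_left h1 (abs_nonneg s)
  -- mgf of centered sum bound, with epsilon
  have hmgf : ∀ ε : ℝ, 0 < ε →
      ∫ ω, Real.exp (s * ((∑ α, Y α ω) - M)) ∂μ ≤
        Real.exp (s ^ 2 * (χ:ℝ) * (V + (χ:ℝ) * ε) / 8) := by
    intro ε hε
    set w : Fin χ → ℝ := fun j => Real.sqrt (Vj j + ε) with hw
    have hwpos : ∀ j, 0 < w j := fun j => Real.sqrt_pos.2 (by
      have := hVjnonneg j; linarith)
    have hwsq : ∀ j, w j ^ 2 = Vj j + ε := fun j => Real.sq_sqrt (by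
      have := hVjnonneg j; linarith)
    have hne : Nonempty (Fin χ) := Fin.pos_iff_nonempty.1 (by exact_mod_cast hχpos)
    set S : ℝ := ∑ j, w j with hS
    have hSpos : 0 < S := Finset.sum_pos (fun j _ => hwpos j) Finset.univ_nonempty
    set p : Fin χ → ℝ := fun j => w j / S with hp
    have hppos : ∀ j, 0 < p j := fun j => div_pos (hwpos j) hSpos
    have hpsum : ∑ j, p j = 1 := by
      simp only [hp]
      rw [← Finset.sum_div, ← hS, div_self hSpos.ne']
    -- pointwise Jensen
    have hjensen : ∀ ω, Real.exp (s * ((∑ α, Y α ω) - M)) ≤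
        ∑ j, p j * Real.exp ((s / p j) * (Xj j ω - mj j)) := by
      intro ω
      have key := convexOn_exp.map_sum_le (t := Finset.univ) (w := p)
        (p := fun j => (s / p j) * (Xj j ω - mj j))
        (fun j _ => (hppos j).le) hpsum (fun j _ => Set.mem_univ _)
      have harg : ∑ j, p j • ((s / p j) * (Xj j ω - mj j)) = s * ((∑ α, Y α ω) - M) := by
        have h1 : ∀ j ∈ Finset.univ, p j • ((s / p j) * (Xj j ω - mj j))
            = s * (Xj j ω - mj j) := by
          intro j _
          have hpne : p j ≠ 0 := (hppos j).ne'
          rw [smul_eq_mul, ← mul_assoc, mul_div_cancel₀ s hpne]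
        rw [Finset.sum_congr rfl h1, ← Finset.mul_sum]
        congr 1
        rw [Finset.sum_sub_distrib, ← hMsum, ← hsum_decomp (fun α => Y α ω)]
      rw [harg] at key
      simpa [smul_eq_mul] using key
    -- integrability of the dominating terms
    have hterm_int : ∀ j, Integrable
        (fun ω => Real.exp ((s / p j) * (Xj j ω - mj j))) μ := by
      intro j
      apply janson_integrable_of_bounded μ
        ((((hXjmeas j).sub measurable_const).const_mul _).exp.aestronglyMeasurable)
        (c := Real.exp (|s / p j| * ((∑ α ∈ D j, max |a α| |b α|) + |mj j|)))
      filter_upwards [hXjbd j] with ω hω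
      rw [abs_of_pos (Real.exp_pos _), Real.exp_le_exp]
      calc (s / p j) * (Xj j ω - mj j) ≤ |(s / p j) * (Xj j ω - mj j)| := le_abs_self _
        _ = |s / p j| * |Xj j ω - mj j| := abs_mul _ _
        _ ≤ |s / p j| * ((∑ α ∈ D j, max |a α| |b α|) + |mj j|) := by
            apply mul_le_mul_of_nonneg_left _ (abs_nonneg _)
            calc |Xj j ω - mj j| ≤ |Xj j ω| + |mj j| := abs_sub _ _
              _ ≤ (∑ α ∈ D j, max |a α| |b α|) + |mj j| := by gcongr
    calc ∫ ω, Real.exp (s * ((∑ α, Y α ω) - M)) ∂μ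
        ≤ ∫ ω, (∑ j, p j * Real.exp ((s / p j) * (Xj j ω - mj j))) ∂μ := by
          apply integral_mono hXint
            (integrable_finset_sum _ (fun j _ => (hterm_int j).const_mul (p j)))
          exact hjensen
      _ = ∑ j, p j * ∫ ω, Real.exp ((s / p j) * (Xj j ω - mj j)) ∂μ := by
          rw [integral_finset_sum _ (fun j _ => (hterm_int j).const_mul (p j))]
          exact Finset.sum_congr rfl fun j _ => integral_const_mul _ _
      _ ≤ ∑ j, p j * Real.exp (s ^ 2 * S ^ 2 / 8) := by
          apply Finset.sum_le_sum
          intro j _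
          apply mul_le_mul_of_nonneg_left _ (hppos j).le
          have h1 : ∀ ω : Ω, Real.exp ((s / p j) * (Xj j ω - mj j))
              = Real.exp (-(s / p j) * mj j) * Real.exp ((s / p j) * Xj j ω) := by
            intro ω
            rw [← Real.exp_add]
            ring_nf
          calc ∫ ω, Real.exp ((s / p j) * (Xj j ω - mj j)) ∂μ
              = Real.exp (-(s / p j) * mj j) * ∫ ω, Real.exp ((s / p j) * Xj j ω) ∂μ := by
                simp_rw [h1]
                rw [integral_const_mul]
            _ ≤ Real.exp (-(s / p j) * mj j) *
                Real.exp ((s / p j) * mj j + (s / p j) ^ 2 * Vj j / 8) :=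
                mul_le_mul_of_nonneg_left (hblock j (s / p j)) (Real.exp_pos _).le
            _ = Real.exp ((s / p j) ^ 2 * Vj j / 8) := by
                rw [← Real.exp_add]
                ring_nf
            _ ≤ Real.exp (s ^ 2 * S ^ 2 / 8) := by
                apply Real.exp_le_exp.2
                have hpj2 : (s / p j) ^ 2 * (Vj j + ε) = s ^ 2 * S ^ 2 := by
                  rw [hp, div_div_eq_mul_div, div_pow, mul_pow]
                  rw [div_mul_eq_mul_div, hwsq j]
                  field_simp
                  exact div_self (by linarith [hVjnonneg j])
                have hVjle : Vj j ≤ Vj j + ε := by linarith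
                have h2 : (s / p j) ^ 2 * Vj j ≤ s ^ 2 * S ^ 2 := by
                  calc (s / p j) ^ 2 * Vj j ≤ (s / p j) ^ 2 * (Vj j + ε) := by
                        apply mul_le_mul_of_nonneg_left hVjle (sq_nonneg _)
                    _ = s ^ 2 * S ^ 2 := hpj2
                linarith
      _ = Real.exp (s ^ 2 * S ^ 2 / 8) := by
          rw [← Finset.sum_mul, hpsum, one_mul]
      _ ≤ Real.exp (s ^ 2 * (χ:ℝ) * (V + (χ:ℝ) * ε) / 8) := by
          apply Real.exp_le_exp.2
          have hCS : S ^ 2 ≤ (χ:ℝ) * ∑ j, w j ^ 2 := by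
            have h := sq_sum_le_card_mul_sum_sq (s := (Finset.univ : Finset (Fin χ))) (f := w)
            simpa [hS] using h
          have hsum2 : ∑ j, w j ^ 2 = V + (χ:ℝ) * ε := by
            simp_rw [hwsq]
            rw [Finset.sum_add_distrib, ← hVsum]
            simp [Finset.card_univ, mul_comm]
          rw [hsum2] at hCS
          nlinarith [sq_nonneg s]
  have hmgf0 : ∫ ω, Real.exp (s * ((∑ α, Y α ω) - M)) ∂μ ≤
      Real.exp (s ^ 2 * (χ:ℝ) * V / 8) := by
    have htend : Filter.Tendsto (fun ε : ℝ => Real.exp (s ^ 2 * (χ:ℝ) * (V + (χ:ℝ) * ε) / 8))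
        (nhdsWithin 0 (Set.Ioi 0)) (nhds (Real.exp (s ^ 2 * (χ:ℝ) * V / 8))) := by
      have hc0 : Continuous (fun ε : ℝ => s ^ 2 * (χ:ℝ) * (V + (χ:ℝ) * ε) / 8) := by
        fun_prop
      have hc : Continuous (fun ε : ℝ => Real.exp (s ^ 2 * (χ:ℝ) * (V + (χ:ℝ) * ε) / 8)) :=
        Real.continuous_exp.comp hc0
      have := hc.tendsto 0
      simp only [mul_zero, add_zero] at this
      exact this.mono_left nhdsWithin_le_nhds
    exact ge_of_tendsto htend (Filter.eventually_of_mem self_mem_nhdsWithin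
      fun ε hε => hmgf ε hε)
  -- Chernoff
  have hchern := measure_ge_le_exp_mul_mgf (μ := μ) (X := fun ω => (∑ α, Y α ω) - M)
    (t := s) t hspos.le hXint
  have hMeq : (∫ ω', (∑ α, Y α ω') ∂μ) = M := by
    rw [integral_finset_sum _ (fun α _ => hYint α)]
  have hset : {ω | (∫ ω', (∑ α, Y α ω') ∂μ) + t ≤ ∑ α, Y α ω}
      = {ω | t ≤ (∑ α, Y α ω) - M} := by
    ext ω
    simp only [Set.mem_setOf_eq, hMeq]
    constructor <;> intro h <;> linarith
  rw [hset]
  refine hchern.trans ?_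
  have : mgf (fun ω => (∑ α, Y α ω) - M) μ s = ∫ ω, Real.exp (s * ((∑ α, Y α ω) - M)) ∂μ := rfl
  rw [this]
  calc Real.exp (-s * t) * ∫ ω, Real.exp (s * ((∑ α, Y α ω) - M)) ∂μ
      ≤ Real.exp (-s * t) * Real.exp (s ^ 2 * (χ:ℝ) * V / 8) := by
        apply mul_le_mul_of_nonneg_left hmgf0 (Real.exp_pos _).le
    _ = Real.exp (-s * t + s ^ 2 * (χ:ℝ) * V / 8) := (Real.exp_add _ _).symm
    _ = Real.exp (-2 * t ^ 2 / ((χ:ℝ) * V)) := by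
        congr 1
        rw [hs]
        field_simp
        ring
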